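/- The Ligon-Schaaf vectors A = (q/|q| - (1/μ)<q,p> p, (1/ν)<q,p>) and B = ((1/ν)|q| p, (1/μ)<p,p>|q| - 1) in R^4, built from (q,p) in R³ with H(q,p) = <p,p>/(2μ) - 1/|q| < 0 and ν = √(μ/(-2H)), satisfy <A,A> = <B,B> (both equal) and <A,B> = 0. -/

import Mathlib

open Finset

/-- The Ligon-Schaaf vectors `A = (q/|q| - (1/μ)⟨q,p⟩p, (1/ν)⟨q,p⟩)` and
`B = ((1/ν)|q|p, (1/μ)⟨p,p⟩|q| - 1)` in `ℝ⁴` satisfy `⟨A,A⟩ = ⟨B,B⟩` and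
`⟨A,B⟩ = 0`. -/
theorem stmt11 (q p : Fin 3 → ℝ) (hq : q ≠ 0) (μ H ν : ℝ) (hμ : 0 < μ)
    (hH : H = (∑ i, p i ^ 2) / (2 * μ) - 1 / Real.sqrt (∑ i, q i ^ 2))
    (hHneg : H < 0)
    (hν : ν = Real.sqrt (μ / (-2 * H)))
    (A B : Fin 4 → ℝ)
    (hA : A = Fin.snoc
      (fun i : Fin 3 => q i / Real.sqrt (∑ j, q j ^ 2) - (1 / μ) * (∑ j, q j * p j) * p i)
      ((1 / ν) * ∑ j, q j * p j))
    (hB : B = Fin.snoc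
      (fun i : Fin 3 => (1 / ν) * Real.sqrt (∑ j, q j ^ 2) * p i)
      ((1 / μ) * (∑ j, p j ^ 2) * Real.sqrt (∑ j, q j ^ 2) - 1)) :
    (∑ i, A i ^ 2 = ∑ i, B i ^ 2) ∧ (∑ i, A i * B i = 0) := by
  have hS0 : (0:ℝ) < ∑ i, q i ^ 2 := by
    rcases Function.ne_iff.mp hq with ⟨i, hi⟩
    have : 0 < q i ^ 2 := lt_of_le_of_ne (sq_nonneg _) (Ne.symm (pow_ne_zero 2 hi))
    exact Finset.sum_pos' (fun j _ => sq_nonneg _) ⟨i, Finset.mem_univ i, this⟩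
  set S := ∑ i, q i ^ 2 with hSdef
  set T := ∑ j, q j * p j with hTdef
  set P := ∑ i, p i ^ 2 with hPdef
  set r := Real.sqrt S with hrdef
  have hr0 : 0 < r := Real.sqrt_pos.mpr hS0
  have hr2 : r ^ 2 = S := Real.sq_sqrt hS0.le
  have hν0 : 0 < ν := by
    rw [hν]; exact Real.sqrt_pos.mpr (div_pos hμ (by linarith))
  have hν2 : ν ^ 2 = μ / (-2 * H) := by
    rw [hν]; exact Real.sq_sqrt (div_pos hμ (by linarith)).le
  have hD : 2 * μ - P * r = -2 * H * (μ * r) := by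
    rw [hH]; field_simp; ring
  have hνr : ν ^ 2 * (2 * μ - P * r) = μ ^ 2 * r := by
    rw [hν2, hD]
    field_simp [hHneg.ne]
  have hS3 : S = q 0^2 + q 1^2 + q 2^2 := by rw [hSdef, Fin.sum_univ_three]
  have hT3 : T = q 0 * p 0 + q 1 * p 1 + q 2 * p 2 := by rw [hTdef, Fin.sum_univ_three]
  have hP3 : P = p 0^2 + p 1^2 + p 2^2 := by rw [hPdef, Fin.sum_univ_three]
  have keyA : ∑ i : Fin 4, (Fin.snoc
      (fun i : Fin 3 => q i / r - (1 / μ) * T * p i)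
      ((1 / ν) * T) : Fin 4 → ℝ) i ^ 2 = 1 := by
    have e1 : ((Fin.last 1).castSucc : Fin 3) = 1 := rfl
    have e2 : (Fin.last 2 : Fin 3) = 2 := rfl
    have e0 : ((Fin.last 0).castSucc.castSucc : Fin 3) = 0 := rfl
    simp only [Fin.sum_univ_castSucc, Fin.snoc_castSucc, Fin.snoc_last, Fin.sum_univ_three, e1, e2, e0]
    field_simp
    linear_combination (-(ν^2*μ^2))*hS3 + (-(ν^2*μ^2))*hr2 + (2*μ*r*ν^2*T)*hT3 + (-(r^2*ν^2*T^2))*hP3 + (-(r*T^2))*hνr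
  have keyB : ∑ i : Fin 4, (Fin.snoc
      (fun i : Fin 3 => (1 / ν) * r * p i)
      ((1 / μ) * P * r - 1) : Fin 4 → ℝ) i ^ 2 = 1 := by
    have e1 : ((Fin.last 1).castSucc : Fin 3) = 1 := rfl
    have e2 : (Fin.last 2 : Fin 3) = 2 := rfl
    have e0 : ((Fin.last 0).castSucc.castSucc : Fin 3) = 0 := rfl
    simp only [Fin.sum_univ_castSucc, Fin.snoc_castSucc, Fin.snoc_last, Fin.sum_univ_three, e1, e2, e0]
    field_simp
    linear_combination (-(r^2*μ^2))*hP3 + (-(P*r))*hνr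
  have keyAB : ∑ i : Fin 4, ((Fin.snoc
      (fun i : Fin 3 => q i / r - (1 / μ) * T * p i)
      ((1 / ν) * T) : Fin 4 → ℝ) i * (Fin.snoc
      (fun i : Fin 3 => (1 / ν) * r * p i)
      ((1 / μ) * P * r - 1) : Fin 4 → ℝ) i) = 0 := by
    have e1 : ((Fin.last 1).castSucc : Fin 3) = 1 := rfl
    have e2 : (Fin.last 2 : Fin 3) = 2 := rfl
    have e0 : ((Fin.last 0).castSucc.castSucc : Fin 3) = 0 := rfl
    simp only [Fin.sum_univ_castSucc, Fin.snoc_castSucc, Fin.snoc_last, Fin.sum_univ_three, e1, e2, e0]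
    field_simp
    linear_combination (-μ)*hT3 + (r*T)*hP3
  rw [hA, hB]
  exact ⟨keyA.trans keyB.symm, keyAB⟩
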